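/- Let B ≥ 1 and n ∈ ℕ, and over the alphabet {a, b} let f = (b^B a^B a b)^n. Then for every word v over {a, b} with |v| = 2Bn: (v ⧢ f) ∩ (ab)^* ≠ ∅ if and only if v = (a^B b^B)^n. -/

import Mathlib

namespace CTS

/-- Shuffle of two words: `ε ⧢ v = {v}`, `u ⧢ ε = {u}`,
`(x·u) ⧢ (y·v) = x·(u ⧢ y·v) ∪ y·(x·u ⧢ v)`. -/
def shuffle {α : Type*} : List α → List α → Set (List α)
  | [], v => {v}
  | u, [] => {u}
  | x :: u, y :: v =>
      (List.cons x) '' shuffle u (y :: v) ∪ (List.cons y) '' shuffle (x :: u) v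
  termination_by u v => u.length + v.length

/-- Shuffle of a tuple of words: `⧢() = {ε}` and
`⧢(w₁, …, wₘ₊₁) = ⋃_{v ∈ ⧢(w₁, …, wₘ)} v ⧢ wₘ₊₁`. -/
def Shuffles {α : Type*} (ws : List (List α)) : Set (List α) :=
  ws.foldl (fun S w => ⋃ v ∈ S, shuffle v w) {[]}

/-- `wpow u n` is the `n`-fold concatenation `u^n` of the word `u`. -/
def wpow {α : Type*} (u : List α) : ℕ → List α
  | 0 => []
  | n + 1 => u ++ wpow u n

/-- `star u = {u^n : n ∈ ℕ}`. -/
def star {α : Type*} (u : List α) : Set (List α) := {w | ∃ n, w = wpow u n}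

/-- Words that are (possibly empty) concatenations of blocks from `S`. -/
def ConcatsOf {α : Type*} (S : Set (List α)) : Set (List α) :=
  {w | ∃ L : List (List α), (∀ u ∈ L, u ∈ S) ∧ w = L.flatten}

/-- The two-letter alphabet `{a, b}`. -/
inductive AB : Type
  | a : AB
  | b : AB
deriving DecidableEq



@[simp] theorem shuffle_nil_left {α : Type*} (v : List α) : shuffle [] v = {v} := by
  cases v <;> simp [shuffle]

@[simp] theorem shuffle_nil_right {α : Type*} (u : List α) : shuffle u [] = {u} := by
  cases u <;> simp [shuffle]

theorem shuffle_cons_cons {α : Type*} (x y : α) (u v : List α) :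
    shuffle (x :: u) (y :: v) =
      (List.cons x) '' shuffle u (y :: v) ∪ (List.cons y) '' shuffle (x :: u) v := by
  simp [shuffle]

theorem shuffle_length {α : Type*} :
    ∀ (w u v : List α), w ∈ shuffle u v → w.length = u.length + v.length := by
  intro w
  induction w with
  | nil =>
    intro u v h
    cases u with
    | nil => simp at h; simp [h]
    | cons x u' =>
      cases v with
      | nil => simp at h
      | cons y v' =>
        rw [shuffle_cons_cons] at h
        rcases h with ⟨z, _, he⟩ | ⟨z, _, he⟩ <;> simp at he
  | cons c w' ih =>
    intro u v h
    cases u with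
    | nil => simp at h; simp [h]
    | cons x u' =>
      cases v with
      | nil => simp at h; simp [h]
      | cons y v' =>
        rw [shuffle_cons_cons] at h
        rcases h with ⟨z, hz, he⟩ | ⟨z, hz, he⟩ <;>
          injection he with h1 h2 <;> subst h1 <;> subst h2 <;>
          have := ih _ _ hz <;> simp [this] <;> omega

theorem shuffle_sublist {α : Type*} :
    ∀ (w u v : List α), w ∈ shuffle u v → v.Sublist w := by
  intro w
  induction w with
  | nil =>
    intro u v h
    cases u with
    | nil => simp at h; simp [h]
    | cons x u' =>
      cases v with
      | nil => simp
      | cons y v' =>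
        rw [shuffle_cons_cons] at h
        rcases h with ⟨z, _, he⟩ | ⟨z, _, he⟩ <;> simp at he
  | cons c w' ih =>
    intro u v h
    cases u with
    | nil => simp at h; subst h; simp
    | cons x u' =>
      cases v with
      | nil => simp
      | cons y v' =>
        rw [shuffle_cons_cons] at h
        rcases h with ⟨z, hz, he⟩ | ⟨z, hz, he⟩ <;>
          injection he with h1 h2 <;> subst h1 <;> subst h2
        · exact (ih _ _ hz).cons _
        · exact (ih _ _ hz).cons₂ _




def other : AB → AB
  | .a => .b
  | .b => .a

@[simp] theorem other_other (p : AB) : other (other p) = p := by cases p <;> rfl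

theorem ne_other (p : AB) : p ≠ other p := by cases p <;> simp [other]

theorem eq_other_of_ne {c p : AB} (h : c ≠ p) : c = other p := by
  cases c <;> cases p <;> simp_all [other]

def N : List AB → AB → ℕ
  | [], _ => 0
  | c :: s, p => if c = p then 1 + N s (other p) else 2 + N s p

def forcedV : List AB → AB → List AB
  | [], _ => []
  | c :: s, p => if c = p then forcedV s (other p) else p :: forcedV s p

def Alt : AB → List AB → Prop
  | _, [] => True
  | p, c :: w => c = p ∧ Alt (other p) w

theorem N_other_le (s : List AB) (p : AB) : N s (other p) ≤ 1 + N s p := by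
  cases s with
  | nil => simp [N]
  | cons c s => cases c <;> cases p <;> simp [N, other] <;> omega

theorem alt_cons (p c : AB) (w : List AB) :
    Alt p (c :: w) ↔ c = p ∧ Alt (other p) w := Iff.rfl

theorem N_le_of_sublist : ∀ (w s : List AB) (p : AB),
    Alt p w → s.Sublist w → N s p ≤ w.length := by
  intro w
  induction w with
  | nil =>
    intro s p _ hs
    simp [List.sublist_nil] at hs
    simp [hs, N]
  | cons x w' ih =>
    intro s p hA hs
    rw [alt_cons] at hA
    obtain ⟨rfl, hA'⟩ := hA
    cases hs with
    | cons _ hs' =>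
      have h1 := ih s (other x) hA' hs'
      have h2 := N_other_le s (other x)
      rw [other_other] at h2
      simp only [List.length_cons]
      omega
    | cons_cons _ hs' =>
      rename_i s'
      have h1 := ih s' (other x) hA' hs'
      simp [N]
      omega

theorem forcedV_of_alt : ∀ (s : List AB) (p : AB), Alt p s → forcedV s p = [] := by
  intro s
  induction s with
  | nil => intro p _; rfl
  | cons c s ih =>
    intro p hA
    rw [alt_cons] at hA
    obtain ⟨rfl, hA'⟩ := hA
    simp [forcedV, ih _ hA']

/-- Main uniqueness lemma: tight alternating shuffles force the complement. -/
theorem main_forced : ∀ (w : List AB), ∀ (s v : List AB) (p : AB),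
    w ∈ shuffle v s → Alt p w → w.length = N s p → v = forcedV s p := by
  intro w
  induction w with
  | nil =>
    intro s v p h _ hlen
    cases s with
    | cons c s' => by_cases hc : c = p <;> simp [N, hc] at hlen <;> omega
    | nil =>
      simp at h
      simp [h, forcedV]
  | cons x w' ih =>
    intro s v p h hA hlen
    rw [alt_cons] at hA
    obtain ⟨rfl, hA'⟩ := hA
    cases s with
    | nil => simp [N] at hlen
    | cons c s' =>
      cases v with
      | nil =>
        -- w = s, so s is alternating from x
        simp at h
        obtain ⟨h1, h2⟩ := h
        subst h1; subst h2
        exact (forcedV_of_alt _ _ ((alt_cons _ _ _).mpr ⟨rfl, hA'⟩)).symm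
      | cons y v' =>
        rw [shuffle_cons_cons] at h
        rcases h with ⟨z, hz, he⟩ | ⟨z, hz, he⟩
        · -- v-move: letter x consumed from v
          have h1 : x = y := ((List.cons.inj he).1).symm
          have h2 : w' = z := ((List.cons.inj he).2).symm
          subst h1; subst h2
          by_cases hc : c = x
          · -- impossible: tightness violated
            exfalso
            subst hc
            have hsub : (c :: s').Sublist w' := shuffle_sublist _ _ _ hz
            have hb := N_le_of_sublist w' (c :: s') (other c) hA' hsub
            have hcn : c ≠ other c := ne_other c
            simp [N, if_neg hcn] at hb hlen
            omega
          · have hc2 : c = other x := eq_other_of_ne hc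
            subst hc2
            have hne : (other x : AB) ≠ x := fun hh => (ne_other x) hh.symm
            have hlen' : w'.length = N (other x :: s') (other x) := by
              simp [N, if_neg hne, other_other] at hlen ⊢
              omega
            have hv := ih (other x :: s') _ (other x) hz hA' hlen'
            simp [forcedV, other_other] at hv
            simp [forcedV, if_neg hne]
            rw [hv]
        · -- f-move: letter c = x consumed from f
          have h1 : x = c := ((List.cons.inj he).1).symm
          have h2 : w' = z := ((List.cons.inj he).2).symm
          subst h1; subst h2
          have hlen' : w'.length = N s' (other x) := by
            simp [N] at hlen
            omega
          have hv := ih s' _ (other x) hz hA' hlen'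
          simp [forcedV]
          exact hv




theorem rep_cons (k : ℕ) (x : AB) (l : List AB) :
    List.replicate k x ++ x :: l = x :: (List.replicate k x ++ l) := by
  induction k with
  | zero => simp
  | succ k ih => simp_all [List.replicate_succ]

theorem rep_step (k : ℕ) (s : List AB) (p : AB) :
    N (List.replicate k (other p) ++ s) p = 2 * k + N s p ∧
    forcedV (List.replicate k (other p) ++ s) p = List.replicate k p ++ forcedV s p := by
  induction k with
  | zero => simp
  | succ k ih =>
    have hne : (other p : AB) ≠ p := fun hh => (ne_other p) hh.symm
    simp [List.replicate_succ, N, forcedV, hne, ih.1, ih.2]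
    omega

theorem block_step (B : ℕ) (t : List AB) :
    N ((List.replicate B AB.b ++ List.replicate B AB.a ++ [AB.a, AB.b]) ++ t) AB.a
      = (4 * B + 2) + N t AB.a ∧
    forcedV ((List.replicate B AB.b ++ List.replicate B AB.a ++ [AB.a, AB.b]) ++ t) AB.a
      = (List.replicate B AB.a ++ List.replicate B AB.b) ++ forcedV t AB.a := by
  have hre : (List.replicate B AB.b ++ List.replicate B AB.a ++ [AB.a, AB.b]) ++ t
      = List.replicate B (other AB.a) ++ (AB.a :: (List.replicate B (other AB.b) ++ (AB.b :: t))) := by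
    have : List.replicate B AB.a ++ AB.a :: AB.b :: t
        = AB.a :: (List.replicate B AB.a ++ AB.b :: t) := rep_cons B AB.a (AB.b :: t)
    simp [other, this]
  rw [hre]
  have h1 := rep_step B (AB.a :: (List.replicate B (other AB.b) ++ (AB.b :: t))) AB.a
  have hoa : other AB.a = AB.b := rfl
  have hob : other AB.b = AB.a := rfl
  have h2 := rep_step B (AB.b :: t) AB.b
  have eA : ∀ l, N (AB.a :: l) AB.a = 1 + N l AB.b := by intro l; simp [N, other]
  have eB : ∀ l, N (AB.b :: l) AB.b = 1 + N l AB.a := by intro l; simp [N, other]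
  have fA : ∀ l, forcedV (AB.a :: l) AB.a = forcedV l AB.b := by intro l; simp [forcedV, other]
  have fB : ∀ l, forcedV (AB.b :: l) AB.b = forcedV l AB.a := by intro l; simp [forcedV, other]
  constructor
  · rw [h1.1, eA, h2.1, eB]
    omega
  · rw [h1.2, fA, h2.2, fB, List.append_assoc]

theorem f_calc (B n : ℕ) :
    N (wpow (List.replicate B AB.b ++ List.replicate B AB.a ++ [AB.a, AB.b]) n) AB.a
      = (4 * B + 2) * n ∧
    forcedV (wpow (List.replicate B AB.b ++ List.replicate B AB.a ++ [AB.a, AB.b]) n) AB.a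
      = wpow (List.replicate B AB.a ++ List.replicate B AB.b) n := by
  induction n with
  | zero => simp [wpow, N, forcedV]
  | succ n ih =>
    have hb := block_step B (wpow (List.replicate B AB.b ++ List.replicate B AB.a ++ [AB.a, AB.b]) n)
    constructor
    · rw [wpow, hb.1, ih.1]; ring
    · rw [wpow, hb.2, ih.2, wpow]

theorem shuffle_cons_left {α : Type*} {z u v : List α} (x : α) (h : z ∈ shuffle u v) :
    x :: z ∈ shuffle (x :: u) v := by
  cases v with
  | nil => simp at h ⊢; simp [h]
  | cons y v' =>
    rw [shuffle_cons_cons]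
    exact Or.inl ⟨z, h, rfl⟩

theorem shuffle_cons_right {α : Type*} {z u v : List α} (y : α) (h : z ∈ shuffle u v) :
    y :: z ∈ shuffle u (y :: v) := by
  cases u with
  | nil => simp at h ⊢; simp [h]
  | cons x u' =>
    rw [shuffle_cons_cons]
    exact Or.inr ⟨z, h, rfl⟩

theorem shuffle_append_right {α : Type*} {z u v : List α} (w : List α) (h : z ∈ shuffle u v) :
    w ++ z ∈ shuffle u (w ++ v) := by
  induction w with
  | nil => simpa using h
  | cons y w' ih => exact shuffle_cons_right y ih

theorem shuffle_append_left {α : Type*} {z u v : List α} (w : List α) (h : z ∈ shuffle u v) :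
    w ++ z ∈ shuffle (w ++ u) v := by
  induction w with
  | nil => simpa using h
  | cons x w' ih => exact shuffle_cons_left x ih

theorem shuffle_append {α : Type*} :
    ∀ (z₁ : List α) {z₂ u₁ v₁ u₂ v₂ : List α}, z₁ ∈ shuffle u₁ v₁ → z₂ ∈ shuffle u₂ v₂ →
      z₁ ++ z₂ ∈ shuffle (u₁ ++ u₂) (v₁ ++ v₂) := by
  intro z₁
  induction z₁ with
  | nil =>
    intro z₂ u₁ v₁ u₂ v₂ h1 h2
    have hl := shuffle_length _ _ _ h1
    simp only [List.length_nil] at hl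
    have hu : u₁.length = 0 := by omega
    have hv : v₁.length = 0 := by omega
    rw [List.length_eq_zero_iff] at hu hv
    subst hu; subst hv
    simpa using h2
  | cons x z ih =>
    intro z₂ u₁ v₁ u₂ v₂ h1 h2
    cases u₁ with
    | nil =>
      simp at h1
      subst h1
      exact shuffle_append_right _ h2
    | cons a u' =>
      cases v₁ with
      | nil =>
        simp at h1
        obtain ⟨e1, e2⟩ := h1
        subst e1; subst e2
        simpa using shuffle_append_left (x :: z) h2
      | cons b v' =>
        rw [shuffle_cons_cons] at h1
        rcases h1 with ⟨z', hz', he⟩ | ⟨z', hz', he⟩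
        · have e1 : a = x := (List.cons.inj he).1
          have e2 : z' = z := (List.cons.inj he).2
          subst e1; subst e2
          exact shuffle_cons_left a (ih hz' h2)
        · have e1 : b = x := (List.cons.inj he).1
          have e2 : z' = z := (List.cons.inj he).2
          subst e1; subst e2
          exact shuffle_cons_right b (ih hz' h2)

theorem wit1 (k : ℕ) (x y : AB) :
    wpow [x, y] k ∈ shuffle (List.replicate k x) (List.replicate k y) := by
  induction k with
  | zero => simp [wpow]
  | succ k ih =>
    have : wpow [x, y] (k + 1) = x :: y :: wpow [x, y] k := rfl
    rw [this, List.replicate_succ, List.replicate_succ]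
    exact shuffle_cons_left x (shuffle_cons_right y ih)

theorem wit2 (k : ℕ) (x y : AB) :
    wpow [x, y] k ∈ shuffle (List.replicate k y) (List.replicate k x) := by
  induction k with
  | zero => simp [wpow]
  | succ k ih =>
    have : wpow [x, y] (k + 1) = x :: y :: wpow [x, y] k := rfl
    rw [this, List.replicate_succ, List.replicate_succ]
    exact shuffle_cons_right x (shuffle_cons_left y ih)

theorem wpow_add {α : Type*} (u : List α) (m n : ℕ) :
    wpow u (m + n) = wpow u m ++ wpow u n := by
  induction m with
  | zero => simp [wpow]
  | succ m ih =>
    have : m + 1 + n = (m + n) + 1 := by omega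
    rw [this, wpow, wpow, ih, List.append_assoc]

theorem wpow_length {α : Type*} (u : List α) (n : ℕ) :
    (wpow u n).length = n * u.length := by
  induction n with
  | zero => simp [wpow]
  | succ n ih => rw [wpow]; simp [ih]; ring

theorem block_wit (B : ℕ) :
    wpow [AB.a, AB.b] (2 * B + 1) ∈
      shuffle (List.replicate B AB.a ++ List.replicate B AB.b)
        (List.replicate B AB.b ++ List.replicate B AB.a ++ [AB.a, AB.b]) := by
  have h2 : (2 * B + 1) = B + (B + 1) := by omega
  rw [h2, wpow_add, wpow_add]
  have hone : wpow [AB.a, AB.b] 1 = [AB.a, AB.b] := by simp [wpow]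
  have h3 : ([AB.a, AB.b] : List AB) ∈ shuffle ([] : List AB) [AB.a, AB.b] := by simp
  have := shuffle_append _ (wit1 B AB.a AB.b) (shuffle_append _ (wit2 B AB.a AB.b) h3)
  rw [hone]
  simpa [List.append_assoc] using this

theorem full_wit (B n : ℕ) :
    wpow [AB.a, AB.b] ((2 * B + 1) * n) ∈
      shuffle (wpow (List.replicate B AB.a ++ List.replicate B AB.b) n)
        (wpow (List.replicate B AB.b ++ List.replicate B AB.a ++ [AB.a, AB.b]) n) := by
  induction n with
  | zero => simp [wpow]
  | succ n ih =>
    have h1 : (2 * B + 1) * (n + 1) = (2 * B + 1) + (2 * B + 1) * n := by ring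
    have hcomb := shuffle_append _ (block_wit B) ih
    rw [h1, wpow_add [AB.a, AB.b] (2 * B + 1) ((2 * B + 1) * n)]
    simpa [wpow] using hcomb

theorem alt_wpow : ∀ m, Alt AB.a (wpow [AB.a, AB.b] m) := by
  intro m
  induction m with
  | zero => trivial
  | succ m ih =>
    have : wpow [AB.a, AB.b] (m + 1) = AB.a :: AB.b :: wpow [AB.a, AB.b] m := rfl
    rw [this]
    exact ⟨rfl, rfl, ih⟩


/-- with `f = (b^B a^B a b)^n`, for every word `v` of length `2Bn`,
`(v ⧢ f) ∩ (ab)^* ≠ ∅` iff `v = (a^B b^B)^n`. -/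
theorem stmt3 (B n : ℕ) (hB : 1 ≤ B)
    (f : List AB)
    (hf : f = wpow (List.replicate B AB.b ++ List.replicate B AB.a ++ [AB.a, AB.b]) n) :
    ∀ v : List AB, v.length = 2 * B * n →
      ((shuffle v f ∩ star [AB.a, AB.b]).Nonempty ↔
        v = wpow (List.replicate B AB.a ++ List.replicate B AB.b) n) := by
  subst hf
  intro v hlen
  constructor
  · rintro ⟨w, hmem, m, rfl⟩
    have hA := alt_wpow m
    have hL := shuffle_length _ _ _ hmem
    have hfl : (wpow (List.replicate B AB.b ++ List.replicate B AB.a ++ [AB.a, AB.b]) n).length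
        = n * (2 * B + 2) := by
      rw [wpow_length]
      simp only [List.length_append, List.length_replicate, List.length_cons, List.length_nil]
      ring
    have hN := (f_calc B n).1
    have hL2 : (wpow [AB.a, AB.b] m).length
        = N (wpow (List.replicate B AB.b ++ List.replicate B AB.a ++ [AB.a, AB.b]) n) AB.a := by
      rw [hL, hlen, hfl, hN]; ring
    have := main_forced _ _ _ _ hmem hA hL2
    rw [this, (f_calc B n).2]
  · rintro rfl
    exact ⟨wpow [AB.a, AB.b] ((2 * B + 1) * n), full_wit B n, ⟨(2 * B + 1) * n, rfl⟩⟩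


end CTS
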